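/- Let G be a connected irregular graph on n ≥ 3 vertices with m edges, and let e = uv be an edge with deg(u) ≤ 2m/n and deg(v) ≤ 2m/n, such that G − e is connected. Then s(G) < s(G − e). -/

import Mathlib

open Finset

/-- The degree deviation measure `s(G) = ∑_v |deg(v) - 2m/n|`. -/
noncomputable def degDev {V : Type*} [Fintype V] [DecidableEq V]
    (G : SimpleGraph V) [DecidableRel G.Adj] : ℝ :=
  ∑ v : V, |(G.degree v : ℝ) - 2 * G.edgeFinset.card / (Fintype.card V)|

lemma degDev_congr {V : Type*} [Fintype V] [DecidableEq V]
    (G : SimpleGraph V) (h1 h2 : DecidableRel G.Adj) :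
    @degDev V _ _ G h1 = @degDev V _ _ G h2 := by
  congr!

theorem degDev_lt_deleteEdge {n : ℕ} (hn : 3 ≤ n) (G : SimpleGraph (Fin n))
    [DecidableRel G.Adj] (hconn : G.Connected)
    (hirr : ∃ u v, G.degree u ≠ G.degree v)
    (u v : Fin n) (hadj : G.Adj u v)
    (hu : (G.degree u : ℝ) ≤ 2 * G.edgeFinset.card / n)
    (hv : (G.degree v : ℝ) ≤ 2 * G.edgeFinset.card / n)
    (hconn' : (G.deleteEdges {s(u, v)}).Connected) :
    degDev G < @degDev _ _ _ (G.deleteEdges {s(u, v)}) (Classical.decRel _) := by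
  classical
  have huv : u ≠ v := G.ne_of_adj hadj
  set G' := G.deleteEdges {s(u,v)} with hG'
  rw [degDev_congr G' (Classical.decRel _) inferInstance]
  -- neighbor sets
  have hnu : G'.neighborSet u = G.neighborSet u \ {v} := by
    ext x
    simp [SimpleGraph.mem_neighborSet, hG', Sym2.congr_right]
    exact fun h _ _ hx => G.loopless.irrefl u (hx ▸ h)
  have hnv : G'.neighborSet v = G.neighborSet v \ {u} := by
    ext x
    simp only [SimpleGraph.mem_neighborSet, hG', SimpleGraph.deleteEdges_adj,
      Set.mem_singleton_iff, Sym2.eq_iff, Set.mem_diff]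
    constructor
    · intro ⟨h, h2⟩; exact ⟨h, fun hx => h2 (Or.inr ⟨trivial, hx⟩)⟩
    · rintro ⟨h, h2⟩
      refine ⟨h, ?_⟩
      rintro (⟨h3, h4⟩ | ⟨h3, h4⟩)
      · exact huv h3.symm
      · exact h2 h4
  have hnw : ∀ w, w ≠ u → w ≠ v → G'.neighborSet w = G.neighborSet w := by
    intro w hwu hwv
    ext x
    simp only [SimpleGraph.mem_neighborSet, hG', SimpleGraph.deleteEdges_adj,
      Set.mem_singleton_iff, Sym2.eq_iff]
    constructor
    · tauto
    · intro h; refine ⟨h, ?_⟩; rintro (⟨rfl, rfl⟩ | ⟨rfl, rfl⟩) <;> simp_all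
  -- degrees
  have hdu : G'.degree u = G.degree u - 1 := by
    rw [SimpleGraph.degree, SimpleGraph.degree, SimpleGraph.neighborFinset_def,
      SimpleGraph.neighborFinset_def, Set.toFinset_congr hnu, Set.toFinset_diff,
      Set.toFinset_singleton]
    rw [Finset.sdiff_singleton_eq_erase, Finset.card_erase_of_mem (by simpa using hadj)]
  have hdv : G'.degree v = G.degree v - 1 := by
    rw [SimpleGraph.degree, SimpleGraph.degree, SimpleGraph.neighborFinset_def,
      SimpleGraph.neighborFinset_def, Set.toFinset_congr hnv, Set.toFinset_diff,
      Set.toFinset_singleton]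
    rw [Finset.sdiff_singleton_eq_erase, Finset.card_erase_of_mem (by simpa using hadj.symm)]
  have hdw : ∀ w, w ≠ u → w ≠ v → G'.degree w = G.degree w := by
    intro w h1 h2
    rw [SimpleGraph.degree, SimpleGraph.degree, SimpleGraph.neighborFinset_def,
      SimpleGraph.neighborFinset_def, Set.toFinset_congr (hnw w h1 h2)]
  have h1u : 0 < G.degree u := by
    rw [SimpleGraph.degree_pos_iff_exists_adj]; exact ⟨v, hadj⟩
  have h1v : 0 < G.degree v := by
    rw [SimpleGraph.degree_pos_iff_exists_adj]; exact ⟨u, hadj.symm⟩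
  -- edges
  have hme : G'.edgeFinset = G.edgeFinset.erase s(u,v) := by
    ext e
    simp [SimpleGraph.mem_edgeFinset, hG', SimpleGraph.edgeSet_deleteEdges, and_comm]
  have hm1 : 1 ≤ G.edgeFinset.card :=
    Finset.card_pos.mpr ⟨s(u,v), by simp [SimpleGraph.mem_edgeFinset, hadj]⟩
  have hm : G'.edgeFinset.card = G.edgeFinset.card - 1 := by
    rw [hme, Finset.card_erase_of_mem (by simp [SimpleGraph.mem_edgeFinset, hadj])]
  set m := G.edgeFinset.card with hmdef
  have hmcast : ((G'.edgeFinset.card : ℕ) : ℝ) = (m : ℝ) - 1 := by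
    rw [hm, Nat.cast_sub hm1]; norm_num
  have hn0 : (0:ℝ) < n := by
    have : (3:ℝ) ≤ n := by exact_mod_cast hn
    linarith
  have hn3 : (3:ℝ) ≤ n := by exact_mod_cast hn
  have h2n : 2/(n:ℝ) ≤ 2/3 := by
    rw [div_le_div_iff₀ hn0 (by norm_num)]; linarith
  have h2npos : 0 < 2/(n:ℝ) := by positivity
  set avg : ℝ := 2 * m / n with havg
  -- degree cast facts
  have hducast : ((G'.degree u : ℕ) : ℝ) = (G.degree u : ℝ) - 1 := by
    rw [hdu, Nat.cast_sub h1u]; norm_num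
  have hdvcast : ((G'.degree v : ℕ) : ℝ) = (G.degree v : ℝ) - 1 := by
    rw [hdv, Nat.cast_sub h1v]; norm_num
  -- existence of a vertex of degree above average
  have hex : ∃ w, avg < (G.degree w : ℝ) := by
    by_contra hno
    push_neg at hno
    have hsum : ∑ w : Fin n, ((G.degree w : ℝ)) = 2 * m := by
      have := G.sum_degrees_eq_twice_card_edges
      exact_mod_cast congrArg (Nat.cast : ℕ → ℝ) this
    have hz : ∑ w : Fin n, (avg - (G.degree w : ℝ)) = 0 := by
      rw [Finset.sum_sub_distrib, hsum, Finset.sum_const, Finset.card_univ,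
        Fintype.card_fin, nsmul_eq_mul, havg]
      field_simp
      ring
    have hall := (Finset.sum_eq_zero_iff_of_nonneg
      (fun w _ => by linarith [hno w] : ∀ w ∈ univ, 0 ≤ avg - (G.degree w : ℝ))).mp hz
    obtain ⟨a, b, hab⟩ := hirr
    have ha := hall a (mem_univ a)
    have hb := hall b (mem_univ b)
    have : ((G.degree a : ℕ) : ℝ) = ((G.degree b : ℕ) : ℝ) := by linarith
    exact hab (by exact_mod_cast this)
  obtain ⟨w₀, hw₀⟩ := hex
  have hw₀u : w₀ ≠ u := by rintro rfl; linarith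
  have hw₀v : w₀ ≠ v := by rintro rfl; linarith
  -- rewrite the two degDevs as explicit sums
  have hdevG : degDev G = ∑ w : Fin n, |(G.degree w : ℝ) - avg| := by
    unfold degDev
    simp [Fintype.card_fin, havg, hmdef]
  have hdevG' : degDev G' = ∑ w : Fin n, |(G'.degree w : ℝ) - (avg - 2/n)| := by
    unfold degDev
    rw [Fintype.card_fin]
    refine Finset.sum_congr rfl fun w _ => ?_
    rw [hmcast]
    congr 1
    rw [havg]
    ring
  -- per-vertex bounds
  have hbu : |(G.degree u : ℝ) - avg| + (1 - 2/n) ≤ |(G'.degree u : ℝ) - (avg - 2/n)| := by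
    rw [hducast, abs_of_nonpos (show (G.degree u : ℝ) - avg ≤ 0 by linarith),
      abs_of_nonpos (by linarith)]
    linarith
  have hbv : |(G.degree v : ℝ) - avg| + (1 - 2/n) ≤ |(G'.degree v : ℝ) - (avg - 2/n)| := by
    rw [hdvcast, abs_of_nonpos (show (G.degree v : ℝ) - avg ≤ 0 by linarith),
      abs_of_nonpos (by linarith)]
    linarith
  have hbw : |(G.degree w₀ : ℝ) - avg| + 2/n ≤ |(G'.degree w₀ : ℝ) - (avg - 2/n)| := by
    rw [hdw w₀ hw₀u hw₀v, abs_of_nonneg (show (0:ℝ) ≤ (G.degree w₀ : ℝ) - avg by linarith),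
      abs_of_nonneg (by linarith)]
    linarith
  have hbrest : ∀ w, w ≠ u → w ≠ v →
      |(G.degree w : ℝ) - avg| - 2/n ≤ |(G'.degree w : ℝ) - (avg - 2/n)| := by
    intro w h1 h2
    rw [hdw w h1 h2]
    have := abs_sub_abs_le_abs_sub ((G.degree w : ℝ) - avg) ((G.degree w : ℝ) - (avg - 2/n))
    have h3 : |((G.degree w : ℝ) - avg) - ((G.degree w : ℝ) - (avg - 2/n))| = 2/n := by
      rw [show ((G.degree w : ℝ) - avg) - ((G.degree w : ℝ) - (avg - 2/n)) = -(2/n) by ring,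
        abs_neg, abs_of_pos h2npos]
    linarith
  -- split the sums over T = {u, v, w₀}
  set T : Finset (Fin n) := {u, v, w₀} with hT
  have hTsub : T ⊆ univ := subset_univ T
  have hcardT : T.card = 3 := by
    rw [hT, Finset.card_insert_of_notMem (by simp [huv, hw₀u.symm]),
      Finset.card_insert_of_notMem (by simp [hw₀v.symm])]
    simp
  have hcardR : ((univ \ T).card : ℝ) = (n : ℝ) - 3 := by
    rw [Finset.card_sdiff_of_subset hTsub, Finset.card_univ, Fintype.card_fin, hcardT,
      Nat.cast_sub hn]
    norm_num
  have hsplitG : ∑ w : Fin n, |(G.degree w : ℝ) - avg| =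
      (∑ w ∈ univ \ T, |(G.degree w : ℝ) - avg|) +
      (|(G.degree u : ℝ) - avg| + |(G.degree v : ℝ) - avg| + |(G.degree w₀ : ℝ) - avg|) := by
    rw [← Finset.sum_sdiff hTsub]
    congr 1
    rw [hT, Finset.sum_insert (by simp [huv, hw₀u.symm]),
      Finset.sum_insert (by simp [hw₀v.symm]), Finset.sum_singleton]
    ring
  have hsplitG' : ∑ w : Fin n, |(G'.degree w : ℝ) - (avg - 2/n)| =
      (∑ w ∈ univ \ T, |(G'.degree w : ℝ) - (avg - 2/n)|) +
      (|(G'.degree u : ℝ) - (avg - 2/n)| + |(G'.degree v : ℝ) - (avg - 2/n)| +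
        |(G'.degree w₀ : ℝ) - (avg - 2/n)|) := by
    rw [← Finset.sum_sdiff hTsub]
    congr 1
    rw [hT, Finset.sum_insert (by simp [huv, hw₀u.symm]),
      Finset.sum_insert (by simp [hw₀v.symm]), Finset.sum_singleton]
    ring
  have hrestsum : (∑ w ∈ univ \ T, |(G.degree w : ℝ) - avg|) - ((n:ℝ) - 3) * (2/n) ≤
      ∑ w ∈ univ \ T, |(G'.degree w : ℝ) - (avg - 2/n)| := by
    have : ∑ w ∈ univ \ T, (|(G.degree w : ℝ) - avg| - 2/n) ≤
        ∑ w ∈ univ \ T, |(G'.degree w : ℝ) - (avg - 2/n)| := by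
      apply Finset.sum_le_sum
      intro w hw
      simp only [Finset.mem_sdiff, hT, Finset.mem_insert, Finset.mem_singleton] at hw
      push_neg at hw
      exact hbrest w hw.2.1 hw.2.2.1
    rw [Finset.sum_sub_distrib, Finset.sum_const, nsmul_eq_mul, hcardR] at this
    linarith
  have hkey : ((n:ℝ) - 3) * (2/n) = 2 - 6/n := by
    field_simp
    ring
  rw [hdevG, hdevG', hsplitG, hsplitG']
  have h4n : 0 < 4/(n:ℝ) := by positivity
  have : 6/(n:ℝ) - 2/n = 4/n := by ring
  linarith
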